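/- Let G be a finite connected k-regular simple graph with n vertices and m edges, where k ≥ 2 (so m = kn/2 ≥ n). Then for every complex number λ, det(λ·I_{2m} − U⁺) = (λ² − 1)^{m−n} · det((λ² + k − 1)·I_n − λ·A(G)). (Characteristic polynomial identity from the proof of Theorem 5.1.) -/

import Mathlib

open Matrix SimpleGraph Polynomial

/-- The transition matrix `U` (over `ℝ`) of the discrete-time quantum walk on `G`, indexed
by darts: `U e f = 2 / deg (t f)` if `t f = o e` and `f ≠ e⁻¹`, `U e f = 2 / deg (t f) - 1`
if `f = e⁻¹`, and `0` otherwise. -/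
noncomputable def quantumUR {V : Type*} [Fintype V] (G : SimpleGraph V)
    [DecidableRel G.Adj] [DecidableEq V] : Matrix G.Dart G.Dart ℝ :=
  fun e f =>
    if f.toProd.2 = e.toProd.1 ∧ f ≠ e.symm then (2 : ℝ) / (G.degree f.toProd.2 : ℝ)
    else if f = e.symm then (2 : ℝ) / (G.degree f.toProd.2 : ℝ) - 1
    else 0

/-- The positive support of a real matrix, viewed as a matrix over a semiring `R`:
entry `1` where the original entry is positive, `0` otherwise. -/
noncomputable def posSupport {α : Type*} (R : Type*) [Zero R] [One R]
    (F : Matrix α α ℝ) : Matrix α α R :=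
  fun i j => if 0 < F i j then 1 else 0

namespace QW

variable {V : Type*} [Fintype V] [DecidableEq V] (G : SimpleGraph V) [DecidableRel G.Adj]

noncomputable def Smat : Matrix G.Dart V ℂ := fun e v => if e.toProd.1 = v then 1 else 0
noncomputable def Tmat : Matrix G.Dart V ℂ := fun e v => if e.toProd.2 = v then 1 else 0
noncomputable def Jmat : Matrix G.Dart G.Dart ℂ := fun e f => if f = e.symm then 1 else 0

lemma TS : (Tmat G)ᵀ * Smat G = G.adjMatrix ℂ := by
  ext u v
  simp only [mul_apply, transpose_apply, Tmat, Smat, adjMatrix_apply,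
    ite_mul, one_mul, zero_mul]
  by_cases h : G.Adj u v
  · rw [Finset.sum_eq_single (SimpleGraph.Dart.mk (v, u) h.symm)]
    · simp [h]
    · rintro b - hb
      by_cases h1 : b.toProd.2 = u
      · rw [if_pos h1]
        rw [if_neg]
        intro h2
        exact hb (by ext <;> simp [h1, h2])
      · rw [if_neg h1]
    · simp
  · rw [if_neg h]
    apply Finset.sum_eq_zero
    rintro e -
    by_cases h1 : e.toProd.2 = u
    · rw [if_pos h1, if_neg]
      intro h2
      exact h (h2 ▸ h1 ▸ e.adj).symm
    · rw [if_neg h1]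

lemma JS : Jmat G * Smat G = Tmat G := by
  ext e v
  simp only [mul_apply, Jmat, Smat, Tmat, ite_mul, one_mul, zero_mul]
  rw [Finset.sum_ite_eq' Finset.univ e.symm (fun f => if f.toProd.1 = v then (1:ℂ) else 0)]
  simp [Dart.symm]
  congr 1

lemma JJ : Jmat G * Jmat G = 1 := by
  ext e g
  simp only [mul_apply, Jmat, ite_mul, one_mul, zero_mul, one_apply]
  rw [Finset.sum_ite_eq' Finset.univ e.symm (fun f => if g = f.symm then (1:ℂ) else 0)]
  simp [Dart.symm_symm, eq_comm]

lemma TT (k : ℕ) (hreg : G.IsRegularOfDegree k) :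
    (Tmat G)ᵀ * Tmat G = (k : ℂ) • 1 := by
  ext u v
  rw [mul_apply, Matrix.smul_apply, one_apply, smul_eq_mul]
  by_cases h : u = v
  · subst h
    rw [if_pos rfl, mul_one]
    have hterm : ∀ e : G.Dart, (Tmat G)ᵀ u e * Tmat G e u
        = if e.toProd.2 = u then (1:ℂ) else 0 := by
      intro e
      simp only [transpose_apply, Tmat]
      by_cases h : e.toProd.2 = u <;> simp [h]
    rw [Finset.sum_congr rfl (fun e _ => hterm e)]
    rw [← Equiv.sum_comp (Function.Involutive.toPerm _ (Dart.symm_involutive (G := G)))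
        (fun e : G.Dart => if e.toProd.2 = u then (1:ℂ) else 0)]
    have hterm2 : ∀ e : G.Dart,
        (if ((Function.Involutive.toPerm _ (Dart.symm_involutive (G := G))) e).toProd.2 = u
          then (1:ℂ) else 0) = if e.toProd.1 = u then 1 else 0 := by
      intro e; simp [Function.Involutive.toPerm, Dart.symm]
      congr 1
    rw [Finset.sum_congr rfl (fun e _ => hterm2 e), Finset.sum_boole]
    rw [show Finset.filter (fun x : G.Dart => x.toProd.1 = u) Finset.univ
        = ({d : G.Dart | d.fst = u} : Finset _) from rfl]
    rw [G.dart_fst_fiber_card_eq_degree u, hreg u]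
  · rw [if_neg h, mul_zero]
    apply Finset.sum_eq_zero
    rintro e -
    simp only [transpose_apply, Tmat]
    by_cases h1 : e.toProd.2 = u
    · rw [if_pos h1, if_neg (by rw [h1]; exact h), one_mul]
    · rw [if_neg h1, zero_mul]

lemma posSupport_eq (k : ℕ) (hreg : G.IsRegularOfDegree k) (hk : 2 ≤ k) :
    posSupport ℂ (quantumUR G) = Smat G * (Tmat G)ᵀ - Jmat G := by
  have hk0 : (0:ℝ) < (k:ℝ) := by positivity
  ext e f
  have hST : (Smat G * (Tmat G)ᵀ) e f = if f.toProd.2 = e.toProd.1 then (1:ℂ) else 0 := by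
    rw [mul_apply]
    rw [Finset.sum_eq_single e.toProd.1]
    · simp [Smat, Tmat]
    · rintro v - hv
      rw [Smat, if_neg (Ne.symm hv), zero_mul]
    · simp
  rw [Matrix.sub_apply, hST]
  simp only [posSupport, Jmat]
  by_cases h2 : f = e.symm
  · subst h2
    have hval : quantumUR G e e.symm = 2/(k:ℝ) - 1 := by
      simp only [quantumUR]
      rw [if_neg (fun hc => hc.2 rfl)]
      simp [hreg e.symm.toProd.2, hreg e.toProd.1]
    rw [hval]
    have h1 : e.symm.toProd.2 = e.toProd.1 := by simp [Dart.symm]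
    rw [if_neg (by rw [not_lt, sub_nonpos, div_le_one hk0]; exact_mod_cast hk)]
    simp [h1]
  · by_cases h1 : f.toProd.2 = e.toProd.1
    · have hval : quantumUR G e f = 2/(k:ℝ) := by
        simp only [quantumUR]
        rw [if_pos ⟨h1, h2⟩, hreg f.toProd.2]
      rw [hval, if_pos (by positivity)]
      simp [h1, h2]
    · have hval : quantumUR G e f = 0 := by
        simp only [quantumUR]
        rw [if_neg (fun hc => h1 hc.1), if_neg h2]
      rw [hval, if_neg (lt_irrefl 0)]
      simp [h1, h2]

variable (V) in
/-- positive darts w.r.t. a fixed enumeration of the vertices -/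
abbrev PosDart : Type _ :=
  {e : G.Dart // Fintype.equivFin V e.toProd.1 < Fintype.equivFin V e.toProd.2}

lemma pos_of_not_pos {e : G.Dart}
    (h : ¬ Fintype.equivFin V e.toProd.1 < Fintype.equivFin V e.toProd.2) :
    Fintype.equivFin V e.symm.toProd.1 < Fintype.equivFin V e.symm.toProd.2 := by
  simp only [Dart.symm]
  have hne : Fintype.equivFin V e.toProd.1 ≠ Fintype.equivFin V e.toProd.2 :=
    fun hc => e.fst_ne_snd ((Fintype.equivFin V).injective hc)
  exact lt_of_le_of_ne (le_of_not_gt h) (Ne.symm hne)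

noncomputable def dartSplit : G.Dart ≃ (PosDart V G ⊕ PosDart V G) where
  toFun e :=
    if h : Fintype.equivFin V e.toProd.1 < Fintype.equivFin V e.toProd.2 then .inl ⟨e, h⟩
    else .inr ⟨e.symm, pos_of_not_pos G h⟩
  invFun x := x.elim (fun a => a.val) (fun a => a.val.symm)
  left_inv e := by
    dsimp only
    split_ifs with h
    · rfl
    · exact e.symm_symm
  right_inv x := by
    rcases x with a | a
    · dsimp only [Sum.elim_inl]
      rw [dif_pos a.prop]
    · dsimp only [Sum.elim_inr]
      rw [dif_neg (by
        intro hc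
        simp only [Dart.symm] at hc
        exact absurd a.prop (not_lt.2 (le_of_lt hc)))]
      rfl

lemma not_symm (a b : PosDart V G) : ¬ ((b : G.Dart) = (a : G.Dart).symm) := by
  intro h
  have hb := b.prop
  rw [h] at hb
  simp only [Dart.symm] at hb
  exact absurd a.prop (not_lt.2 (le_of_lt hb))

lemma card_posDart : Fintype.card (PosDart V G) = G.edgeFinset.card := by
  have h1 : Fintype.card G.Dart = 2 * G.edgeFinset.card := G.dart_card_eq_twice_card_edges
  have h2 : Fintype.card G.Dart = Fintype.card (PosDart V G) + Fintype.card (PosDart V G) := by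
    rw [Fintype.card_congr (dartSplit G), Fintype.card_sum]
  omega

lemma det_lam_add_J (lam : ℂ) (h0 : lam ≠ 0) :
    (lam • (1 : Matrix G.Dart G.Dart ℂ) + Jmat G).det
      = (lam ^ 2 - 1) ^ G.edgeFinset.card := by
  classical
  rw [← Matrix.det_submatrix_equiv_self (dartSplit G).symm]
  have hs1 : ∀ a : PosDart V G, (dartSplit G).symm (.inl a) = (a : G.Dart) := fun a => rfl
  have hs2 : ∀ a : PosDart V G, (dartSplit G).symm (.inr a) = (a : G.Dart).symm := fun a => rfl
  have hval : ∀ a b : G.Dart, (lam • (1 : Matrix G.Dart G.Dart ℂ) + Jmat G) a b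
      = (if a = b then lam else 0) + (if b = a.symm then 1 else 0) := by
    intro a b
    simp only [Matrix.add_apply, Matrix.smul_apply, one_apply, Jmat, smul_eq_mul, mul_ite, mul_one, mul_zero]
  have hblock : (lam • (1 : Matrix G.Dart G.Dart ℂ) + Jmat G).submatrix
      (dartSplit G).symm (dartSplit G).symm
      = Matrix.fromBlocks (lam • 1) 1 1 (lam • 1) := by
    ext i j
    rcases i with a | a <;> rcases j with b | b
    · rw [submatrix_apply, hs1, hs1, hval, fromBlocks_apply₁₁, if_neg (not_symm G a b),
        add_zero, Matrix.smul_apply, one_apply, smul_eq_mul]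
      by_cases hab : a = b
      · subst hab; simp
      · rw [if_neg (fun h => hab (Subtype.ext h)), if_neg hab, mul_zero]
    · rw [submatrix_apply, hs1, hs2, hval, fromBlocks_apply₁₂,
        if_neg (not_symm G b a), zero_add, one_apply]
      by_cases hab : a = b
      · subst hab; simp
      · rw [if_neg (fun h => hab (Subtype.ext (Dart.symm_involutive.injective h)).symm),
          if_neg hab]
    · rw [submatrix_apply, hs2, hs1, hval, fromBlocks_apply₂₁,
        if_neg (fun h => not_symm G a b h.symm), zero_add, Dart.symm_symm, one_apply]
      by_cases hab : a = b
      · subst hab; simp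
      · rw [if_neg (fun h => hab (Subtype.ext h.symm)), if_neg hab]
    · rw [submatrix_apply, hs2, hs2, hval, Dart.symm_symm,
        if_neg (show ¬ ((b : G.Dart).symm = (a : G.Dart)) from fun h => not_symm G b a h.symm),
        add_zero, fromBlocks_apply₂₂, Matrix.smul_apply, one_apply, smul_eq_mul]
      by_cases hab : a = b
      · subst hab; simp
      · rw [if_neg (fun h => hab (Subtype.ext (Dart.symm_involutive.injective h))),
          if_neg hab, mul_zero]
  rw [hblock]
  have hinv : (lam • (1 : Matrix (PosDart V G) (PosDart V G) ℂ)) * (lam⁻¹ • 1) = 1 := by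
    rw [smul_mul_smul_comm, one_mul, mul_inv_cancel₀ h0, one_smul]
  have hinv' : (lam⁻¹ • (1 : Matrix (PosDart V G) (PosDart V G) ℂ)) * (lam • 1) = 1 := by
    rw [smul_mul_smul_comm, one_mul, inv_mul_cancel₀ h0, one_smul]
  haveI : Invertible (lam • (1 : Matrix (PosDart V G) (PosDart V G) ℂ)) :=
    ⟨lam⁻¹ • 1, hinv', hinv⟩
  rw [Matrix.det_fromBlocks₂₂]
  rw [invOf_eq_right_inv hinv]
  rw [Matrix.one_mul, Matrix.mul_one, ← sub_smul]
  rw [det_smul, det_smul, det_one, mul_one, mul_one, ← mul_pow, card_posDart]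
  congr 1
  field_simp

lemma pointwise (k : ℕ) (hreg : G.IsRegularOfDegree k) (hk : 2 ≤ k) (lam : ℂ)
    (h0 : lam ≠ 0) (hc : lam ^ 2 - 1 ≠ 0) :
    (lam ^ 2 - 1) ^ (Fintype.card V) *
      (lam • (1 : Matrix G.Dart G.Dart ℂ) - posSupport ℂ (quantumUR G)).det
      = (lam ^ 2 - 1) ^ G.edgeFinset.card *
        ((lam ^ 2 + (k : ℂ) - 1) • (1 : Matrix V V ℂ) - lam • G.adjMatrix ℂ).det := by
  set c := lam ^ 2 - 1 with hcdef
  have hck : lam ^ 2 + (k : ℂ) - 1 = c + k := by rw [hcdef]; ring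
  rw [posSupport_eq G k hreg hk, hck]
  have expand : (lam • (1 : Matrix G.Dart G.Dart ℂ) + Jmat G) *
      ((lam • (1 : Matrix G.Dart G.Dart ℂ) - Jmat G) * Smat G) = c • Smat G := by
    rw [← Matrix.mul_assoc]
    have hLL : (lam • (1 : Matrix G.Dart G.Dart ℂ) + Jmat G) *
        (lam • (1 : Matrix G.Dart G.Dart ℂ) - Jmat G) = c • 1 := by
      rw [Matrix.add_mul, Matrix.mul_sub, Matrix.mul_sub, JJ]
      simp only [Matrix.smul_mul, Matrix.mul_smul, Matrix.one_mul, Matrix.mul_one, smul_smul]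
      rw [hcdef, sub_smul, one_smul, ← sq]
      abel
    rw [hLL, Matrix.smul_mul, Matrix.one_mul]
  have key : lam • (1 : Matrix G.Dart G.Dart ℂ) - (Smat G * (Tmat G)ᵀ - Jmat G)
      = (lam • 1 + Jmat G) *
        (1 - (c⁻¹ • ((lam • (1 : Matrix G.Dart G.Dart ℂ) - Jmat G) * Smat G)) * (Tmat G)ᵀ) := by
    rw [Matrix.mul_sub, Matrix.mul_one, ← Matrix.mul_assoc, Matrix.mul_smul, expand,
      smul_smul, inv_mul_cancel₀ hc, one_smul]
    abel
  rw [key, det_mul, det_lam_add_J G lam h0, Matrix.det_one_sub_mul_comm]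
  have inner : (Tmat G)ᵀ * (c⁻¹ • ((lam • (1 : Matrix G.Dart G.Dart ℂ) - Jmat G) * Smat G))
      = c⁻¹ • (lam • G.adjMatrix ℂ - (k : ℂ) • 1) := by
    rw [Matrix.mul_smul]
    congr 1
    rw [Matrix.sub_mul, Matrix.smul_mul, Matrix.one_mul, JS, Matrix.mul_sub, Matrix.mul_smul,
      TS, TT G k hreg]
  rw [inner]
  have hone : (1 : Matrix V V ℂ) - c⁻¹ • (lam • G.adjMatrix ℂ - (k : ℂ) • 1)
      = c⁻¹ • (((c + (k : ℂ)) • (1 : Matrix V V ℂ)) - lam • G.adjMatrix ℂ) := by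
    match_scalars
    · field_simp
      ring
    · field_simp
  rw [hone, det_smul, inv_pow]
  field_simp
  rw [← hcdef]
  ring

end QW

theorem stmt9 {V : Type*} [Fintype V] [DecidableEq V] (G : SimpleGraph V)
    [DecidableRel G.Adj] (hconn : G.Connected) (k : ℕ)
    (hreg : G.IsRegularOfDegree k) (hk : 2 ≤ k) (lam : ℂ) :
    (lam • (1 : Matrix G.Dart G.Dart ℂ) - posSupport ℂ (quantumUR G)).det =
      (lam ^ 2 - 1) ^ (G.edgeFinset.card - Fintype.card V) *
        ((lam ^ 2 + (k : ℂ) - 1) • (1 : Matrix V V ℂ) - lam • G.adjMatrix ℂ).det := by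
  classical
  have hnm : Fintype.card V ≤ G.edgeFinset.card := by
    have hsum := G.sum_degrees_eq_twice_card_edges
    rw [Finset.sum_congr rfl (fun v _ => hreg v), Finset.sum_const, Finset.card_univ,
      smul_eq_mul] at hsum
    have h2 : 2 * Fintype.card V ≤ 2 * G.edgeFinset.card := by
      rw [← hsum, mul_comm]
      exact Nat.mul_le_mul_left _ hk
    omega
  set p : ℂ[X] := ((X : ℂ[X]) • (1 : Matrix G.Dart G.Dart ℂ[X])
      - (posSupport ℂ (quantumUR G)).map C).det with hpdef
  set q : ℂ[X] := (((X : ℂ[X]) ^ 2 + ((k : ℕ) : ℂ[X]) - 1) • (1 : Matrix V V ℂ[X])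
      - (X : ℂ[X]) • (G.adjMatrix ℂ).map C).det with hqdef
  have hp : ∀ z : ℂ, eval z p
      = (z • (1 : Matrix G.Dart G.Dart ℂ) - posSupport ℂ (quantumUR G)).det := by
    intro z
    rw [hpdef, ← coe_evalRingHom, RingHom.map_det]
    congr 1
    ext i j
    simp [Matrix.map_apply, Matrix.sub_apply, Matrix.smul_apply, Matrix.one_apply,
      smul_eq_mul, apply_ite (eval z)]
  have hq : ∀ z : ℂ, eval z q
      = ((z ^ 2 + (k : ℂ) - 1) • (1 : Matrix V V ℂ) - z • G.adjMatrix ℂ).det := by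
    intro z
    rw [hqdef, ← coe_evalRingHom, RingHom.map_det]
    congr 1
    ext i j
    simp [Matrix.map_apply, Matrix.sub_apply, Matrix.smul_apply, Matrix.one_apply,
      smul_eq_mul, apply_ite (eval z)]
  have hXc : ((X : ℂ[X]) ^ 2 - 1) ≠ 0 := fun h => by simpa using congrArg (eval 0) h
  have key : p * ((X : ℂ[X]) ^ 2 - 1) ^ (Fintype.card V)
      = ((X : ℂ[X]) ^ 2 - 1) ^ G.edgeFinset.card * q := by
    apply Polynomial.eq_of_infinite_eval_eq
    apply Set.Infinite.mono (s := ({0, 1, -1} : Set ℂ)ᶜ)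
    · intro z hz
      simp only [Set.mem_compl_iff, Set.mem_insert_iff, Set.mem_singleton_iff, not_or] at hz
      obtain ⟨hz0, hz1, hz2⟩ := hz
      have hc : z ^ 2 - 1 ≠ 0 := by
        intro h
        have h' : (z - 1) * (z + 1) = 0 := by linear_combination h
        rcases mul_eq_zero.1 h' with h'' | h''
        · exact hz1 (by linear_combination h'')
        · exact hz2 (by linear_combination h'')
      show eval z _ = eval z _
      simp only [eval_mul, eval_pow, eval_sub, eval_one, eval_X]
      rw [hp z, hq z, mul_comm]
      exact QW.pointwise G k hreg hk z hz0 hc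
    · exact Set.Finite.infinite_compl (((Set.finite_singleton _).insert _).insert _)
  have hpq : p = ((X : ℂ[X]) ^ 2 - 1) ^ (G.edgeFinset.card - Fintype.card V) * q := by
    apply mul_right_cancel₀ (pow_ne_zero (Fintype.card V) hXc)
    rw [key, ← pow_sub_mul_pow ((X : ℂ[X]) ^ 2 - 1) hnm]
    ring
  have := congrArg (eval lam) hpq
  rw [hp lam, eval_mul, eval_pow, eval_sub, eval_pow, eval_one, eval_X, hq lam] at this
  exact this
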